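/- Let Φ(β, λ) = f(β) + g(β, λ) where, for each λ in a neighborhood Λ, f is convex C² and g(·,λ) is proper closed convex, and assume at any minimizer β̂^{(λ)} with generalized support Ŝ that ∇²_{Ŝ,Ŝ} f(β̂^{(λ)}) ≻ 0 and the non-degeneracy condition −∇f(β̂^{(λ)}) ∈ ri(∂_β g(β̂^{(λ)}, λ)) holds. Then for every λ ∈ Λ the minimizer of Φ(·, λ) is unique, so the map λ ↦ β̂^{(λ)} is well-defined on Λ. -/

import Mathlib

open Set

lemma ri_max_aux {E : Type*} [NormedAddCommGroup E] [NormedSpace ℝ E]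
    {P : Set E} {u w : E} (hu : u ∈ intrinsicInterior ℝ P) (hw : w ∈ P)
    (L : E →L[ℝ] ℝ) (hmax : ∀ x ∈ P, L x ≤ L u) : L u ≤ L w := by
  rcases eq_or_ne u w with rfl | hne
  · exact le_rfl
  obtain ⟨x, hx, hxu⟩ := mem_intrinsicInterior.mp hu
  have huP : u ∈ P := intrinsicInterior_subset hu
  have uspan : u ∈ affineSpan ℝ P := subset_affineSpan ℝ P huP
  have wspan : w ∈ affineSpan ℝ P := subset_affineSpan ℝ P hw
  rw [mem_interior_iff_mem_nhds, Metric.mem_nhds_iff] at hx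
  obtain ⟨ε, hε, hball⟩ := hx
  have hnw : (0:ℝ) < ‖u - w‖ := by
    rw [norm_pos_iff]; exact sub_ne_zero_of_ne hne
  set t : ℝ := ε / (2 * ‖u - w‖) with ht
  have htpos : 0 < t := div_pos hε (by positivity)
  set z : E := t • (u - w) + u with hz
  have hzspan : z ∈ affineSpan ℝ P := by
    have := (affineSpan ℝ P).smul_vsub_vadd_mem t uspan wspan uspan
    simpa [vsub_eq_sub, vadd_eq_add] using this
  have hdist : dist (⟨z, hzspan⟩ : affineSpan ℝ P) x < ε := by
    have hxu' : (x : E) = u := hxu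
    rw [Subtype.dist_eq, hxu', dist_eq_norm]
    have : z - u = t • (u - w) := by simp [hz]
    rw [this, norm_smul, Real.norm_eq_abs, abs_of_pos htpos, ht]
    rw [div_mul_eq_mul_div, div_lt_iff₀ (by positivity)]
    nlinarith
  have hzP : z ∈ P := hball hdist
  have := hmax z hzP
  have hLz : L z = t * (L u - L w) + L u := by
    simp only [hz, map_add, map_smul, map_sub, smul_eq_mul]; try ring
  rw [hLz] at this
  nlinarith

lemma ereal_coe_sum {ι : Type*} (s : Finset ι) (a : ι → ℝ) :
    (∑ i ∈ s, ((a i : ℝ) : EReal)) = ((∑ i ∈ s, a i : ℝ) : EReal) := by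
  induction s using Finset.cons_induction with
  | empty => simp
  | cons i s hi ih => rw [Finset.sum_cons, Finset.sum_cons, ih, EReal.coe_add]

lemma ereal_sum_ne_bot {ι : Type*} (s : Finset ι) (F : ι → EReal)
    (h : ∀ i ∈ s, F i ≠ ⊥) : ∑ i ∈ s, F i ≠ ⊥ := by
  induction s using Finset.cons_induction with
  | empty => simp
  | cons i s hi ih =>
      rw [Finset.sum_cons]
      intro hc
      rcases EReal.add_eq_bot_iff.mp hc with h1 | h2
      · exact h i (Finset.mem_cons_self i s) h1
      · exact ih (fun k hk => h k (Finset.mem_cons_of_mem hk)) h2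

lemma ereal_sum_eq_top {ι : Type*} [DecidableEq ι] (s : Finset ι) (F : ι → EReal)
    (hb : ∀ i ∈ s, F i ≠ ⊥) {i : ι} (hi : i ∈ s) (ht : F i = ⊤) :
    ∑ k ∈ s, F k = ⊤ := by
  rw [← Finset.add_sum_erase s F hi, ht, EReal.top_add_of_ne_bot]
  exact ereal_sum_ne_bot _ _ (fun k hk => hb k (Finset.mem_of_mem_erase hk))

set_option maxHeartbeats 2000000 in

/-- Uniqueness of the inner minimizer under restricted injectivity and
non-degeneracy (Liang–Fadili–Peyré, Prop 4.1): for a separable non-smooth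
penalty `g(β, λ) = Σⱼ gⱼ(βⱼ, λ)` and smooth convex `f`, if at every minimizer
the Hessian of `f` restricted to the generalized support is positive definite
and `-∇f(β̂) ∈ ri ∂g(β̂, λ)`, then for every `λ ∈ Λ` the minimizer is unique. -/
theorem stmt_11 (p r : ℕ)
    (f : EuclideanSpace ℝ (Fin p) → ℝ)
    (hf : ContDiff ℝ 2 f) (hconv : ConvexOn ℝ Set.univ f)
    (f' : EuclideanSpace ℝ (Fin p) → EuclideanSpace ℝ (Fin p))
    (hf' : ∀ x, HasGradientAt f (f' x) x)
    (H : EuclideanSpace ℝ (Fin p) →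
      EuclideanSpace ℝ (Fin p) →L[ℝ] EuclideanSpace ℝ (Fin p))
    (hH : ∀ x, HasFDerivAt f' (H x) x)
    (Λ : Set (EuclideanSpace ℝ (Fin r)))
    (g : Fin p → ℝ → EuclideanSpace ℝ (Fin r) → EReal)
    (hg_bot : ∀ j x lam, g j x lam ≠ ⊥)
    (hg_proper : ∀ j lam, ∃ x, g j x lam ≠ ⊤)
    (hg_closed : ∀ j lam, LowerSemicontinuous (fun x => g j x lam))
    (hg_convex : ∀ j lam, ∀ x y θ : ℝ, 0 ≤ θ → θ ≤ 1 →
      g j (θ * x + (1 - θ) * y) lam ≤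
        (θ : EReal) * g j x lam + ((1 - θ : ℝ) : EReal) * g j y lam)
    -- existence of a minimizer for each `λ ∈ Λ`
    (hexists : ∀ lam ∈ Λ, ∃ β : EuclideanSpace ℝ (Fin p), ∀ β',
      ((f β : ℝ) : EReal) + ∑ j, g j (β j) lam ≤
        ((f β' : ℝ) : EReal) + ∑ j, g j (β' j) lam)
    -- restricted injectivity: `∇²_{Ŝ,Ŝ} f(β̂) ≻ 0` at every minimizer
    (hPD : ∀ lam ∈ Λ, ∀ β : EuclideanSpace ℝ (Fin p),
      (∀ β', ((f β : ℝ) : EReal) + ∑ j, g j (β j) lam ≤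
        ((f β' : ℝ) : EReal) + ∑ j, g j (β' j) lam) →
      ∀ x : EuclideanSpace ℝ (Fin p), x ≠ 0 →
        (∀ j, j ∉ {j : Fin p | ∃ u : ℝ,
            {u' : ℝ | ∀ z : ℝ, ((u' * (z - β j) : ℝ) : EReal) + g j (β j) lam ≤ g j z lam}
              = {u}} → x j = 0) →
        0 < @inner ℝ _ _ x (H β x))
    -- non-degeneracy: `-∇f(β̂) ∈ ri(∂_β g(β̂, λ))` at every minimizer
    (hND : ∀ lam ∈ Λ, ∀ β : EuclideanSpace ℝ (Fin p),
      (∀ β', ((f β : ℝ) : EReal) + ∑ j, g j (β j) lam ≤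
        ((f β' : ℝ) : EReal) + ∑ j, g j (β' j) lam) →
      (fun j => -(f' β j)) ∈ intrinsicInterior ℝ
        (Set.univ.pi (fun j : Fin p =>
          {u : ℝ | ∀ z : ℝ, ((u * (z - β j) : ℝ) : EReal) + g j (β j) lam ≤ g j z lam}))) :
    ∀ lam ∈ Λ, ∃! β : EuclideanSpace ℝ (Fin p), ∀ β',
      ((f β : ℝ) : EReal) + ∑ j, g j (β j) lam ≤
        ((f β' : ℝ) : EReal) + ∑ j, g j (β' j) lam := by
  intro lam hlam
  obtain ⟨β₂, hmin₂⟩ := hexists lam hlam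
  refine ⟨β₂, hmin₂, ?_⟩
  intro β₁ hmin₁
  by_contra hne
  -- a comparison point with finite penalty
  obtain ⟨βf, hβf⟩ : ∃ β' : EuclideanSpace ℝ (Fin p), ∀ j, g j (β' j) lam ≠ ⊤ :=
    ⟨WithLp.toLp 2 (fun j => (hg_proper j lam).choose), fun j => (hg_proper j lam).choose_spec⟩
  -- every minimizer has finite penalty values
  have hfin : ∀ β : EuclideanSpace ℝ (Fin p),
      (∀ β', ((f β : ℝ) : EReal) + ∑ j, g j (β j) lam ≤
        ((f β' : ℝ) : EReal) + ∑ j, g j (β' j) lam) →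
      ∀ j, g j (β j) lam ≠ ⊤ := by
    intro β hmin j htop
    have h1 := hmin βf
    have hsumtop : (∑ j, g j (β j) lam) = ⊤ :=
      ereal_sum_eq_top _ _ (fun k _ => hg_bot k (β k) lam) (Finset.mem_univ j) htop
    rw [hsumtop, EReal.add_top_of_ne_bot (EReal.coe_ne_bot _)] at h1
    have hfsum : (∑ j, g j (βf j) lam) = ((∑ j, (g j (βf j) lam).toReal : ℝ) : EReal) := by
      rw [← ereal_coe_sum]
      exact Finset.sum_congr rfl fun k _ => (EReal.coe_toReal (hβf k) (hg_bot k _ lam)).symm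
    rw [hfsum, ← EReal.coe_add] at h1
    exact (EReal.coe_lt_top _).not_ge h1
  have hG : ∀ β, (∀ β', ((f β : ℝ) : EReal) + ∑ j, g j (β j) lam ≤
        ((f β' : ℝ) : EReal) + ∑ j, g j (β' j) lam) →
      ∀ j, g j (β j) lam = (((g j (β j) lam).toReal : ℝ) : EReal) :=
    fun β hm j => (EReal.coe_toReal (hfin β hm j) (hg_bot _ _ _)).symm
  set G1 : Fin p → ℝ := fun j => (g j (β₁ j) lam).toReal with hG1
  set G2 : Fin p → ℝ := fun j => (g j (β₂ j) lam).toReal with hG2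
  have hsum1 : (∑ j, g j (β₁ j) lam) = ((∑ j, G1 j : ℝ) : EReal) := by
    rw [← ereal_coe_sum]; exact Finset.sum_congr rfl fun j _ => hG β₁ hmin₁ j
  have hsum2 : (∑ j, g j (β₂ j) lam) = ((∑ j, G2 j : ℝ) : EReal) := by
    rw [← ereal_coe_sum]; exact Finset.sum_congr rfl fun j _ => hG β₂ hmin₂ j
  have hm12 : f β₁ + ∑ j, G1 j = f β₂ + ∑ j, G2 j := by
    have a := hmin₁ β₂; have b := hmin₂ β₁
    rw [hsum1, hsum2, ← EReal.coe_add, ← EReal.coe_add] at a b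
    exact le_antisymm (by exact_mod_cast a) (by exact_mod_cast b)
  set D : EuclideanSpace ℝ (Fin p) := β₁ - β₂ with hD
  set γ : ℝ → EuclideanSpace ℝ (Fin p) := fun s => β₂ + s • D with hγ
  have hγcoord : ∀ (s : ℝ) (j : Fin p), γ s j = s * β₁ j + (1 - s) * β₂ j := by
    intro s j
    simp only [hγ, hD, PiLp.add_apply, PiLp.smul_apply, PiLp.sub_apply, smul_eq_mul]
    ring
  have hγsm : ∀ s : ℝ, γ s = s • β₁ + (1 - s) • β₂ := by
    intro s; simp only [hγ, hD]; module
  -- claim A : affinity along the segment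
  have claimA : ∀ s : ℝ, 0 ≤ s → s ≤ 1 →
      f (γ s) = s * f β₁ + (1 - s) * f β₂ ∧
      ∀ j, g j (γ s j) lam = ((s * G1 j + (1 - s) * G2 j : ℝ) : EReal) := by
    intro s hs0 hs1
    have hgle : ∀ j, g j (γ s j) lam ≤ ((s * G1 j + (1 - s) * G2 j : ℝ) : EReal) := by
      intro j
      have h := hg_convex j lam (β₁ j) (β₂ j) s hs0 hs1
      rw [hG β₁ hmin₁ j, hG β₂ hmin₂ j, ← EReal.coe_mul, ← EReal.coe_mul,
        ← EReal.coe_add] at h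
      rw [hγcoord s j]
      exact h
    have hfle : f (γ s) ≤ s * f β₁ + (1 - s) * f β₂ := by
      rw [hγsm s]
      have := hconv.2 (mem_univ β₁) (mem_univ β₂) (show (0:ℝ) ≤ s from hs0) (show (0:ℝ) ≤ 1 - s by linarith) (show s + (1 - s) = 1 by ring)
      simpa [smul_eq_mul] using this
    have hγtop : ∀ j, g j (γ s j) lam ≠ ⊤ :=
      fun j => ((hgle j).trans_lt (EReal.coe_lt_top _)).ne
    have hGseq : ∀ j, g j (γ s j) lam = (((g j (γ s j) lam).toReal : ℝ) : EReal) :=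
      fun j => (EReal.coe_toReal (hγtop j) (hg_bot _ _ _)).symm
    set Gs : Fin p → ℝ := fun j => (g j (γ s j) lam).toReal with hGsdef
    have hGsle : ∀ j, Gs j ≤ s * G1 j + (1 - s) * G2 j := by
      intro j; have := hgle j; rw [hGseq j] at this; exact_mod_cast this
    have hmins : f β₂ + ∑ j, G2 j ≤ f (γ s) + ∑ j, Gs j := by
      have h := hmin₂ (γ s)
      rw [hsum2, ← EReal.coe_add,
        show (∑ j, g j (γ s j) lam) = ((∑ j, Gs j : ℝ) : EReal) by
          rw [← ereal_coe_sum]; exact Finset.sum_congr rfl fun j _ => hGseq j,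
        ← EReal.coe_add] at h
      exact_mod_cast h
    have hsumB : ∑ j, (s * G1 j + (1 - s) * G2 j) = s * ∑ j, G1 j + (1 - s) * ∑ j, G2 j := by
      rw [Finset.sum_add_distrib, Finset.mul_sum, Finset.mul_sum]
    have hsumle : ∑ j, Gs j ≤ ∑ j, (s * G1 j + (1 - s) * G2 j) :=
      Finset.sum_le_sum fun j _ => hGsle j
    have hfeq : f (γ s) = s * f β₁ + (1 - s) * f β₂ := by nlinarith [hm12]
    have hsumeq : ∑ j, (s * G1 j + (1 - s) * G2 j - Gs j) = 0 := by
      rw [Finset.sum_sub_distrib]; nlinarith [hm12]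
    have heach := (Finset.sum_eq_zero_iff_of_nonneg
      (fun j _ => by have := hGsle j; linarith)).mp hsumeq
    refine ⟨hfeq, fun j => ?_⟩
    rw [hGseq j]
    have := heach j (Finset.mem_univ j)
    congr 1
    linarith
  -- the midpoint
  have hhalf0 : (0:ℝ) ≤ 1/2 := by norm_num
  have hhalf1 : (1/2:ℝ) ≤ 1 := by norm_num
  obtain ⟨hfβ, hgβ⟩ := claimA (1/2) hhalf0 hhalf1
  set Gm : Fin p → ℝ := fun j => (1/2) * G1 j + (1 - 1/2) * G2 j with hGm
  have hsumm : (∑ j, g j (γ (1/2) j) lam) = ((∑ j, Gm j : ℝ) : EReal) := by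
    rw [← ereal_coe_sum]; exact Finset.sum_congr rfl fun j _ => hgβ j
  have hsumGm : ∑ j, Gm j = (1/2) * ∑ j, G1 j + (1 - 1/2) * ∑ j, G2 j := by
    rw [hGm]; rw [Finset.sum_add_distrib, Finset.mul_sum, Finset.mul_sum]
  -- the midpoint is a minimizer
  have hminβ : ∀ β', ((f (γ (1/2)) : ℝ) : EReal) + ∑ j, g j (γ (1/2) j) lam ≤
      ((f β' : ℝ) : EReal) + ∑ j, g j (β' j) lam := by
    intro β'
    have hval : ((f (γ (1/2)) : ℝ) : EReal) + ∑ j, g j (γ (1/2) j) lam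
        = ((f β₂ + ∑ j, G2 j : ℝ) : EReal) := by
      rw [hsumm, ← EReal.coe_add]
      congr 1
      rw [hfβ, hsumGm]
      linarith [hm12]
    rw [hval]
    have h := hmin₂ β'
    rw [hsum2, ← EReal.coe_add] at h
    exact h
  -- non-degeneracy at the midpoint
  have hndβ := hND lam hlam (γ (1/2)) hminβ
  set u : Fin p → ℝ := fun j => -(f' (γ (1/2)) j) with hu
  set S : Fin p → Set ℝ := fun j =>
    {v : ℝ | ∀ z : ℝ, ((v * (z - γ (1/2) j) : ℝ) : EReal) + g j (γ (1/2) j) lam ≤ g j z lam}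
    with hS
  have huP : u ∈ Set.univ.pi S := intrinsicInterior_subset hndβ
  have huS : ∀ j, u j ∈ S j := fun j => huP j (mem_univ j)
  -- subgradient inequality, real form
  have hsub : ∀ j, ∀ v ∈ S j, v * (β₁ j - γ (1/2) j) + Gm j ≤ G1 j := by
    intro j v hv
    have h := hv (β₁ j)
    rw [hgβ j, hG β₁ hmin₁ j, ← EReal.coe_add] at h
    exact_mod_cast h
  -- derivative of γ
  have hγd : ∀ s : ℝ, HasDerivAt γ D s := by
    intro s
    have h1 : HasDerivAt (fun t : ℝ => t • D) ((1:ℝ) • D) s := (hasDerivAt_id s).smul_const D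
    rw [one_smul] at h1
    simpa [hγ] using h1.const_add β₂
  -- derivative of f along the segment
  have hFd : ∀ s : ℝ, HasDerivAt (fun t => f (γ t)) (@inner ℝ _ _ (f' (γ s)) D) s := by
    intro s
    have hg' := (hasGradientAt_iff_hasFDerivAt.mp (hf' (γ s)))
    have h2 := hg'.comp_hasDerivAt s (hγd s)
    simpa [InnerProductSpace.toDual_apply_apply, Function.comp_def] using h2
  set c : ℝ := f β₁ - f β₂ with hc
  have haff : ∀ s ∈ Set.Ioo (0:ℝ) 1, f (γ s) = f β₂ + s * c := by
    intro s hs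
    rw [(claimA s hs.1.le hs.2.le).1, hc]; ring
  have hψ : ∀ s ∈ Set.Ioo (0:ℝ) 1, (@inner ℝ _ _ (f' (γ s)) D) = c := by
    intro s hs
    have h2 : HasDerivAt (fun t : ℝ => f β₂ + t * c) c s := by
      simpa using (hasDerivAt_mul_const (x := s) c).const_add (f β₂)
    have hev : (fun t => f (γ t)) =ᶠ[nhds s] (fun t : ℝ => f β₂ + t * c) := by
      filter_upwards [Ioo_mem_nhds hs.1 hs.2] with t ht using haff t ht
    exact (hFd s).unique (h2.congr_of_eventuallyEq hev)
  have hc12 : (@inner ℝ _ _ (f' (γ (1/2))) D) = c := hψ _ (by norm_num)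
  -- second derivative along the segment vanishes
  have hfd' : HasDerivAt (fun s => f' (γ s)) ((H (γ (1/2))) D) (1/2) :=
    (hH (γ (1/2))).comp_hasDerivAt _ (hγd _)
  have hψd : HasDerivAt (fun s => (@inner ℝ _ _ (f' (γ s)) D))
      (@inner ℝ _ _ ((H (γ (1/2))) D) D) (1/2) := by
    have h3 := hfd'.inner (𝕜 := ℝ) (hasDerivAt_const (1/2 : ℝ) D)
    simpa using h3
  have hψ0 : HasDerivAt (fun s => (@inner ℝ _ _ (f' (γ s)) D)) 0 (1/2) := by
    have h2 : HasDerivAt (fun _ : ℝ => c) (0:ℝ) (1/2) := hasDerivAt_const _ _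
    refine h2.congr_of_eventuallyEq ?_
    filter_upwards [Ioo_mem_nhds (by norm_num : (0:ℝ) < 1/2) (by norm_num : (1/2:ℝ) < 1)]
      with t ht using hψ t ht
  have hHD : (@inner ℝ _ _ ((H (γ (1/2))) D) D) = 0 := hψd.unique hψ0
  have hHD' : (@inner ℝ _ _ D ((H (γ (1/2))) D)) = 0 := by
    rw [real_inner_comm]; exact hHD
  -- the T-sum argument
  have hinner : ∑ j, f' (γ (1/2)) j * D j = c := by
    have h := hc12
    rw [PiLp.inner_apply] at h
    simpa [RCLike.inner_apply, conj_trivial, mul_comm] using h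
  have hdj : ∀ j, β₁ j - γ (1/2) j = (1/2) * D j := by
    intro j
    rw [hγcoord (1/2) j]
    simp only [hD, PiLp.sub_apply]
    ring
  have hTsum : ∑ j, (G1 j - Gm j - u j * (β₁ j - γ (1/2) j)) = 0 := by
    have h5 : ∑ j, u j * (β₁ j - γ (1/2) j) = -(1/2) * c := by
      calc ∑ j, u j * (β₁ j - γ (1/2) j)
          = ∑ j, (-(1/2)) * (f' (γ (1/2)) j * D j) := by
            refine Finset.sum_congr rfl fun j _ => ?_
            rw [hdj j, hu]; ring
        _ = -(1/2) * ∑ j, f' (γ (1/2)) j * D j := by rw [Finset.mul_sum]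
        _ = -(1/2) * c := by rw [hinner]
    rw [Finset.sum_sub_distrib, Finset.sum_sub_distrib, h5, hsumGm]
    rw [hc]
    linarith [hm12]
  have hT0 : ∀ j, G1 j - Gm j - u j * (β₁ j - γ (1/2) j) = 0 := by
    intro j
    have := (Finset.sum_eq_zero_iff_of_nonneg (fun k _ => by
      have := hsub k (u k) (huS k); linarith)).mp hTsum j (Finset.mem_univ j)
    exact this
  -- support of D
  have hsupp : ∀ j : Fin p, (¬∃ v : ℝ, S j = {v}) → D j = 0 := by
    intro j hns
    by_contra hDj
    have hdj0 : β₁ j - γ (1/2) j ≠ 0 := by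
      rw [hdj j]; intro h; apply hDj; linarith
    obtain ⟨v, hvS, hvne⟩ : ∃ v ∈ S j, v ≠ u j := by
      by_contra h; push_neg at h
      exact hns ⟨u j, Set.eq_singleton_iff_unique_mem.mpr ⟨huS j, fun v hv => h v hv⟩⟩
    have hvle : v * (β₁ j - γ (1/2) j) ≤ u j * (β₁ j - γ (1/2) j) := by
      have h1 := hsub j v hvS
      have h2 := hT0 j
      linarith
    have hvlt : v * (β₁ j - γ (1/2) j) < u j * (β₁ j - γ (1/2) j) :=
      lt_of_le_of_ne hvle (fun h => hvne (mul_right_cancel₀ hdj0 h))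
    set L : (Fin p → ℝ) →L[ℝ] ℝ :=
      (β₁ j - γ (1/2) j) • (ContinuousLinearMap.proj (R := ℝ) (φ := fun _ : Fin p => ℝ) j)
      with hL
    have hmax : ∀ x ∈ Set.univ.pi S, L x ≤ L u := by
      intro x hx
      have hxS : x j ∈ S j := hx j (mem_univ j)
      have h1 := hsub j (x j) hxS
      have h2 := hT0 j
      simp only [hL, ContinuousLinearMap.smul_apply, ContinuousLinearMap.proj_apply,
        smul_eq_mul]
      nlinarith [mul_comm (β₁ j - γ (1/2) j) (x j), mul_comm (β₁ j - γ (1/2) j) (u j)]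
    set w : Fin p → ℝ := Function.update u j v with hw
    have hwP : w ∈ Set.univ.pi S := by
      intro k _
      rcases eq_or_ne k j with rfl | hkj
      · rw [hw]; simpa [Function.update_self] using hvS
      · rw [hw]; simpa [Function.update_of_ne hkj] using huS k
    have hfinal := ri_max_aux hndβ hwP L hmax
    simp only [hL, ContinuousLinearMap.smul_apply, ContinuousLinearMap.proj_apply,
      smul_eq_mul, hw, Function.update_self] at hfinal
    nlinarith [mul_comm (β₁ j - γ (1/2) j) v, mul_comm (β₁ j - γ (1/2) j) (u j)]
  -- conclusion via positive definiteness
  have hDne : D ≠ 0 := by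
    rw [hD]; exact sub_ne_zero_of_ne hne
  have hpos := hPD lam hlam (γ (1/2)) hminβ D hDne (by
    intro j hj
    refine hsupp j fun hex => hj ?_
    rw [Set.mem_setOf_eq]
    obtain ⟨v, hv⟩ := hex
    simp only [hS] at hv
    exact ⟨v, hv⟩)
  rw [hHD'] at hpos
  exact lt_irrefl 0 hpos
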